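/- There exist a minimizer q* of E_q(f) over B_{χ²}(p,δ) and an index k* ≥ ℓ such that q*(x_i) > 0 for all i ≤ k* and q*(x_i) = 0 for all i > k* (i.e., the support of some optimal q* is a down-set {x_1,...,x_{k*}} with k* ≥ ℓ). -/

import Mathlib

open Finset

private lemma sum_eq_add_pair {n : ℕ} (i j : Fin n) (hij : i ≠ j) (a b : Fin n → ℝ)
    (h : ∀ k, k ≠ i → k ≠ j → a k = b k) :
    ∑ k, a k = (∑ k, b k) + ((a i - b i) + (a j - b j)) := by
  have hpair : ∑ k, (a k - b k) = (a i - b i) + (a j - b j) := by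
    have h2 : ∑ k, (a k - b k) = ∑ k ∈ ({i, j} : Finset (Fin n)), (a k - b k) := by
      refine (Finset.sum_subset (Finset.subset_univ _) ?_).symm
      intro k _ hk
      simp only [Finset.mem_insert, Finset.mem_singleton, not_or] at hk
      rw [h k hk.1 hk.2, sub_self]
    rw [h2, Finset.sum_pair hij]
  have hs : ∑ k, (a k - b k) = ∑ k, a k - ∑ k, b k := Finset.sum_sub_distrib a b
  linarith [hpair, hs.symm]

private lemma perturb {n : ℕ} (f p : Fin n → ℝ) (hp0 : ∀ i, 0 < p i) (δ : ℝ)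
    (q : Fin n → ℝ)
    (hq : ((∀ k, 0 ≤ q k) ∧ ∑ k, q k = 1) ∧ ∑ k, (q k - p k) ^ 2 / p k ≤ δ)
    (i j : Fin n) (hij : i ≠ j) (hqi : q i = 0) (hqj : 0 < q j) (hfij : f i ≤ f j) :
    ∃ q' : Fin n → ℝ,
      (((∀ k, 0 ≤ q' k) ∧ ∑ k, q' k = 1) ∧ ∑ k, (q' k - p k) ^ 2 / p k ≤ δ) ∧
      (∑ k, q' k * f k) ≤ (∑ k, q k * f k) ∧
      0 < q' i ∧ 0 < q' j ∧ (∀ k, k ≠ i → k ≠ j → q' k = q k) := by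
  have hpi := hp0 i
  have hpj := hp0 j
  set ε : ℝ := min (q j / 2) (q j * p i / (p i + p j)) with hεdef
  have hε0 : 0 < ε := lt_min (by linarith) (by positivity)
  have hεj : ε < q j := lt_of_le_of_lt (min_le_left _ _) (by linarith)
  have hε2 : ε * (p i + p j) ≤ q j * p i := by
    have h1 : ε ≤ q j * p i / (p i + p j) := min_le_right _ _
    rwa [le_div_iff₀ (by positivity)] at h1
  set q' : Fin n → ℝ := fun k => if k = i then ε else if k = j then q j - ε else q k with hq'def
  have hq'i : q' i = ε := by simp [hq'def]
  have hq'j : q' j = q j - ε := by simp [hq'def, hij.symm]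
  have hq'k : ∀ k, k ≠ i → k ≠ j → q' k = q k := by
    intro k h1 h2; simp [hq'def, h1, h2]
  refine ⟨q', ⟨⟨⟨?_, ?_⟩, ?_⟩, ?_, ?_, ?_, hq'k⟩⟩
  · intro k
    by_cases h1 : k = i
    · subst h1; rw [hq'i]; exact hε0.le
    by_cases h2 : k = j
    · subst h2; rw [hq'j]; linarith
    · rw [hq'k k h1 h2]; exact hq.1.1 k
  · rw [sum_eq_add_pair i j hij q' q hq'k, hq'i, hq'j, hqi, hq.1.2]; ring
  · have hsum := sum_eq_add_pair i j hij (fun k => (q' k - p k) ^ 2 / p k)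
      (fun k => (q k - p k) ^ 2 / p k) (fun k h1 h2 => by rw [hq'k k h1 h2])
    simp only [hq'i, hq'j, hqi] at hsum
    rw [hsum]
    have key : ((ε - p i) ^ 2 / p i - (0 - p i) ^ 2 / p i)
        + ((q j - ε - p j) ^ 2 / p j - (q j - p j) ^ 2 / p j) ≤ 0 := by
      rw [← sub_div, ← sub_div, div_add_div _ _ hpi.ne' hpj.ne']
      apply div_nonpos_of_nonpos_of_nonneg _ (by positivity)
      nlinarith [mul_le_mul_of_nonneg_left hε2 hε0.le, mul_pos hqj hpi, hε0]
    linarith [hq.2]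
  · have hsum := sum_eq_add_pair i j hij (fun k => q' k * f k)
      (fun k => q k * f k) (fun k h1 h2 => by rw [hq'k k h1 h2])
    simp only [hq'i, hq'j, hqi] at hsum
    rw [hsum]
    nlinarith [mul_nonneg hε0.le (sub_nonneg.mpr hfij)]
  · rw [hq'i]; exact hε0
  · rw [hq'j]; linarith
theorem chi2_exists_minimizer_with_downset_support
    (n : ℕ) (hn : 0 < n) (f p : Fin n → ℝ) (hf : Monotone f)
    (hp0 : ∀ i, 0 < p i) (hp1 : ∑ i, p i = 1)
    (δ : ℝ) (hδ : 0 ≤ δ)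
    (ℓ : Fin n) (hℓ : f ℓ = f ⟨0, hn⟩)
    (hℓmax : ∀ i, f i = f ⟨0, hn⟩ → i ≤ ℓ) :
    let B : Set (Fin n → ℝ) :=
      {q | ((∀ i, 0 ≤ q i) ∧ ∑ i, q i = 1) ∧ ∑ i, (q i - p i) ^ 2 / p i ≤ δ}
    ∃ qstar ∈ B, ∃ kstar : Fin n, ℓ ≤ kstar ∧
      (∀ q ∈ B, (∑ i, qstar i * f i) ≤ ∑ i, q i * f i) ∧
      (∀ i, i ≤ kstar → 0 < qstar i) ∧
      (∀ i, kstar < i → qstar i = 0) := by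
  intro B
  -- p ∈ B
  have hpB : p ∈ B := by
    refine ⟨⟨fun i => (hp0 i).le, hp1⟩, ?_⟩
    have : ∀ i : Fin n, (p i - p i) ^ 2 / p i = 0 := by intro i; simp
    simp only [this, Finset.sum_const_zero]; exact hδ
  -- B is compact
  have hBclosed : IsClosed B := by
    have h1 : IsClosed {q : Fin n → ℝ | ∀ i, 0 ≤ q i} := by
      have : {q : Fin n → ℝ | ∀ i, 0 ≤ q i} = ⋂ i, {q | 0 ≤ q i} := by
        ext q; simp
      rw [this]
      exact isClosed_iInter fun i => isClosed_le continuous_const (continuous_apply i)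
    have h2 : IsClosed {q : Fin n → ℝ | ∑ i, q i = 1} :=
      isClosed_eq (continuous_finset_sum _ fun i _ => continuous_apply i) continuous_const
    have h3 : IsClosed {q : Fin n → ℝ | ∑ i, (q i - p i) ^ 2 / p i ≤ δ} :=
      isClosed_le (continuous_finset_sum _ fun i _ =>
        (((continuous_apply i).sub continuous_const).pow 2).div_const _) continuous_const
    exact (h1.inter h2).inter h3
  have hBcompact : IsCompact B := by
    refine IsCompact.of_isClosed_subset (isCompact_Icc (a := (0 : Fin n → ℝ)) (b := 1))
      hBclosed ?_
    intro q hq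
    constructor
    · intro i; exact hq.1.1 i
    · intro i
      have : q i ≤ ∑ k, q k :=
        Finset.single_le_sum (fun k _ => hq.1.1 k) (Finset.mem_univ i)
      simpa [hq.1.2] using this
  -- existence of a minimizer
  obtain ⟨q0, hq0B, hq0min⟩ := hBcompact.exists_isMinOn ⟨p, hpB⟩
    ((continuous_finset_sum _ fun i _ =>
      (continuous_apply i).mul continuous_const).continuousOn
      (f := fun q : Fin n → ℝ => ∑ i, q i * f i))
  rw [isMinOn_iff] at hq0min
  -- minimizer with fewest zeros
  set Z : (Fin n → ℝ) → ℕ := fun q => (Finset.univ.filter fun k => q k = 0).card with hZ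
  set S : Set ℕ := {m | ∃ q ∈ B, (∀ q' ∈ B, (∑ k, q k * f k) ≤ ∑ k, q' k * f k) ∧ Z q = m}
    with hS
  have hSne : S.Nonempty := ⟨Z q0, q0, hq0B, hq0min, rfl⟩
  obtain ⟨qstar, hqB, hqmin, hqZ⟩ := Nat.sInf_mem hSne
  -- key: no zero coordinate can see a positive coordinate with larger f value
  have hkey : ∀ i j : Fin n, qstar i = 0 → 0 < qstar j → f i ≤ f j → False := by
    intro i j hqi hqj hfij
    have hij : i ≠ j := by rintro rfl; exact absurd hqi hqj.ne'
    obtain ⟨q', hq'B, hq'obj, hq'i, hq'j, hq'k⟩ :=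
      perturb f p hp0 δ qstar hqB i j hij hqi hqj hfij
    have hq'min : ∀ q'' ∈ B, (∑ k, q' k * f k) ≤ ∑ k, q'' k * f k :=
      fun q'' hq'' => le_trans hq'obj (hqmin q'' hq'')
    have hsub : (Finset.univ.filter fun k => q' k = 0) ⊂
        (Finset.univ.filter fun k => qstar k = 0) := by
      constructor
      · intro k hk
        simp only [Finset.mem_filter, Finset.mem_univ, true_and] at hk ⊢
        have hki : k ≠ i := fun h => by rw [h] at hk; exact hq'i.ne' hk
        have hkj : k ≠ j := fun h => by rw [h] at hk; exact hq'j.ne' hk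
        rw [← hq'k k hki hkj]; exact hk
      · intro hcon
        have hi : i ∈ Finset.univ.filter fun k => qstar k = 0 := by
          simp [hqi]
        have := hcon hi
        simp only [Finset.mem_filter, Finset.mem_univ, true_and] at this
        exact hq'i.ne' this
    have hlt : Z q' < Z qstar := Finset.card_lt_card hsub
    have hle : sInf S ≤ Z q' := Nat.sInf_le ⟨q', hq'B, hq'min, rfl⟩
    omega
  -- support of qstar
  have hqnn : ∀ k, 0 ≤ qstar k := hqB.1.1
  have hTne : (Finset.univ.filter fun k => 0 < qstar k).Nonempty := by
    by_contra h
    rw [Finset.not_nonempty_iff_eq_empty, Finset.filter_eq_empty_iff] at h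
    have hall : ∀ k : Fin n, qstar k = 0 := fun k =>
      le_antisymm (not_lt.mp (h (Finset.mem_univ k))) (hqnn k)
    have h1 := hqB.1.2
    rw [Finset.sum_eq_zero (fun k _ => hall k)] at h1
    exact one_ne_zero h1.symm
  set kstar := (Finset.univ.filter fun k => 0 < qstar k).max' hTne with hkdef
  have hkmem := (Finset.univ.filter fun k => 0 < qstar k).max'_mem hTne
  rw [← hkdef] at hkmem
  simp only [Finset.mem_filter, Finset.mem_univ, true_and] at hkmem
  have hpos : ∀ i, i ≤ kstar → 0 < qstar i := by
    intro i hik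
    by_contra h
    have hzi : qstar i = 0 := le_antisymm (not_lt.mp h) (hqnn i)
    exact hkey i kstar hzi hkmem (hf hik)
  have hzero : ∀ i, kstar < i → qstar i = 0 := by
    intro i hik
    by_contra h
    have : 0 < qstar i := lt_of_le_of_ne (hqnn i) (Ne.symm h)
    have hmem : i ∈ Finset.univ.filter fun k => 0 < qstar k := by simp [this]
    have := Finset.le_max' _ i hmem
    rw [← hkdef] at this
    exact absurd hik (not_lt.mpr this)
  have hlk : ℓ ≤ kstar := by
    by_contra h
    push_neg at h
    have hzℓ : qstar ℓ = 0 := hzero ℓ h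
    have h0k : (⟨0, hn⟩ : Fin n) ≤ kstar := by
      rw [Fin.le_def]; exact Nat.zero_le _
    exact hkey ℓ kstar hzℓ hkmem (hℓ ▸ hf h0k)
  exact ⟨qstar, hqB, kstar, hlk, hqmin, hpos, hzero⟩
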